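/- Let σ(t) = 1/(1 + exp(−t)) and define A(t) = σ′(t)(1 − σ(t))(3σ(t) − 1). Then for every η ∈ (0, 1) there exists w₀ > 0 such that for all w > w₀, A((1 − η)w) > A(w). Consequently, for all sufficiently large w, the bias-direction curvature of the adversarial-training loss exceeds that of the normal-training loss at the perfect decision boundary: 2A(w) + 2A((1 − η)w) > 4A(w). This is the acceleration claim of Proposition 1: a prescribed adversarial budget η ∈ (0, 1) strictly increases the curvature of the loss at the optimum, accelerating the learning of the bias. -/

import Mathlib

lemma sigma_hasDerivAt (t : ℝ) :
    HasDerivAt (fun t : ℝ => 1 / (1 + Real.exp (-t)))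
      (Real.exp (-t) / (1 + Real.exp (-t)) ^ 2) t := by
  have hne : (1 + Real.exp (-t)) ≠ 0 := by positivity
  have h1 : HasDerivAt (fun x : ℝ => 1 + Real.exp (-x)) (Real.exp (-t) * (-1)) t := by
    exact ((hasDerivAt_const t (1:ℝ)).add ((hasDerivAt_neg t).exp)).congr_deriv (by ring)
  have h2 := h1.inv hne
  have h3 := h2.congr_deriv (show -(Real.exp (-t) * (-1)) / (1 + Real.exp (-t)) ^ 2 = Real.exp (-t) / (1 + Real.exp (-t)) ^ 2 by ring)
  exact h3.congr_of_eventuallyEq (Filter.Eventually.of_forall fun x => by simp [one_div])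

lemma sigma_deriv (t : ℝ) :
    deriv (fun t : ℝ => 1 / (1 + Real.exp (-t))) t
      = Real.exp (-t) / (1 + Real.exp (-t)) ^ 2 :=
  (sigma_hasDerivAt t).deriv

lemma A_closed (t : ℝ) :
    deriv (fun t : ℝ => 1 / (1 + Real.exp (-t))) t
      * (1 - 1 / (1 + Real.exp (-t)))
      * (3 * (1 / (1 + Real.exp (-t))) - 1)
      = Real.exp (-t) ^ 2 * (2 - Real.exp (-t)) / (1 + Real.exp (-t)) ^ 4 := by
  rw [sigma_deriv]
  have hne : (1 + Real.exp (-t)) ≠ 0 := by positivity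
  field_simp
  ring

lemma key_ineq (a b : ℝ) (hb : 0 < b) (hab : 3 * b ≤ a) (ha : a ≤ 1 / 2) :
    b ^ 2 * (2 - b) / (1 + b) ^ 4 < a ^ 2 * (2 - a) / (1 + a) ^ 4 := by
  have ha0 : 0 < a := by linarith
  have h1 : b ^ 2 * (2 - b) / (1 + b) ^ 4 ≤ 2 * b ^ 2 := by
    rw [div_le_iff₀ (by positivity)]
    nlinarith [sq_nonneg b, pow_le_pow_left₀ (by linarith : (0:ℝ) ≤ 1) (by linarith : (1:ℝ) ≤ 1 + b) 4, sq_nonneg (b*b), sq_nonneg (b*(1+b))]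
  have h2 : (8 / 27 : ℝ) * a ^ 2 ≤ a ^ 2 * (2 - a) / (1 + a) ^ 4 := by
    rw [le_div_iff₀ (by positivity)]
    have hden : (1 + a) ^ 4 ≤ (3 / 2 : ℝ) ^ 4 :=
      pow_le_pow_left₀ (by linarith) (by linarith) 4
    nlinarith [sq_nonneg a]
  have h3 : 2 * b ^ 2 < (8 / 27 : ℝ) * a ^ 2 := by nlinarith
  linarith

/-- Acceleration claim of Proposition 1: with `A(t) = σ′(t)(1 − σ(t))(3σ(t) − 1)`,
for every budget `η ∈ (0, 1)` there is `w₀ > 0` such that for all `w > w₀` one has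
`A((1 − η)w) > A(w)`, and hence `2A(w) + 2A((1 − η)w) > 4A(w)`: the bias-direction
curvature of the adversarial-training loss exceeds that of the normal-training loss. -/
theorem stmt_15 (η : ℝ) (h0 : 0 < η) (h1 : η < 1) :
    let σ : ℝ → ℝ := fun t => 1 / (1 + Real.exp (-t))
    let A : ℝ → ℝ := fun t => deriv σ t * (1 - σ t) * (3 * σ t - 1)
    ∃ w₀ > (0 : ℝ), ∀ w > w₀,
      A ((1 - η) * w) > A w ∧
      2 * A w + 2 * A ((1 - η) * w) > 4 * A w := by
  intro σ A
  have hlog3 : (0:ℝ) < Real.log 3 := Real.log_pos (by norm_num)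
  have hlog2 : (0:ℝ) < Real.log 2 := Real.log_pos (by norm_num)
  have h1η : (0:ℝ) < 1 - η := by linarith
  refine ⟨Real.log 3 / η + Real.log 2 / (1 - η), by positivity, fun w hw => ?_⟩
  have hA : ∀ t : ℝ, A t = Real.exp (-t) ^ 2 * (2 - Real.exp (-t)) / (1 + Real.exp (-t)) ^ 4 :=
    fun t => A_closed t
  set a := Real.exp (-((1 - η) * w)) with ha_def
  set b := Real.exp (-w) with hb_def
  have hb : 0 < b := Real.exp_pos _
  -- w ≥ log 3 / η and w ≥ log 2 / (1-η)
  have hw1 : Real.log 3 / η ≤ w := by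
    have : 0 < Real.log 2 / (1 - η) := by positivity
    linarith [hw]
  have hw2 : Real.log 2 / (1 - η) ≤ w := by
    have : 0 < Real.log 3 / η := by positivity
    linarith [hw]
  have hηw : Real.log 3 ≤ η * w := by
    rw [div_le_iff₀ h0] at hw1; linarith [hw1]
  have h1ηw : Real.log 2 ≤ (1 - η) * w := by
    rw [div_le_iff₀ h1η] at hw2; linarith [hw2]
  have hab : 3 * b ≤ a := by
    have : a = Real.exp (η * w) * b := by
      rw [ha_def, hb_def, ← Real.exp_add]; ring_nf
    rw [this]
    have h3 : (3:ℝ) ≤ Real.exp (η * w) := by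
      calc (3:ℝ) = Real.exp (Real.log 3) := (Real.exp_log (by norm_num)).symm
        _ ≤ Real.exp (η * w) := Real.exp_le_exp.mpr hηw
    nlinarith
  have ha12 : a ≤ 1 / 2 := by
    rw [ha_def]
    calc Real.exp (-((1 - η) * w)) ≤ Real.exp (-Real.log 2) :=
          Real.exp_le_exp.mpr (by linarith)
      _ = 1 / 2 := by rw [Real.exp_neg, Real.exp_log] <;> norm_num
  have key : A w < A ((1 - η) * w) := by
    rw [hA w, hA ((1 - η) * w)]
    exact key_ineq a b hb hab ha12
  exact ⟨key, by linarith⟩
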